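/- Assume for every x ∈ 𝒳 there exists x̂ ∈ 𝒳̂ with d(x,x̂) = 0, fix K ≥ 1 and δ > 0, and let c(δ) = ( Σ_{i=1}^∞ i^{−(1+δ)} )^{−1}. Then for every probability distribution Q^K on 𝒳^K and every guessing function G for block length K: Σ_{x∈𝒳^K} Q^K(x) log₂ G(x) ≥ ( R_K(D,Q^K) − 1 + log₂ c(δ) ) / (1+δ). -/

import Mathlib

open scoped BigOperators Classical
open Filter

section Defs

/-- A probability mass function on a finite alphabet. -/
def IsPMF {α : Type*} [Fintype α] (p : α → ℝ) : Prop :=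
  (∀ a, 0 ≤ p a) ∧ ∑ a, p a = 1

/-- A conditional probability mass function (a channel / test channel). -/
def IsCondPMF {α β : Type*} [Fintype α] [Fintype β] (W : α → β → ℝ) : Prop :=
  ∀ a, IsPMF (W a)

/-- Base-2 Kullback–Leibler divergence `D(Q‖P)`. -/
noncomputable def klDiv2 {α : Type*} [Fintype α] (Q P : α → ℝ) : ℝ :=
  ∑ a, Q a * Real.logb 2 (Q a / P a)

/-- Base-2 mutual information `I(X;X̂)` of the joint law `Q(a) W(b|a)`. -/
noncomputable def mutInf2 {α β : Type*} [Fintype α] [Fintype β]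
    (Q : α → ℝ) (W : α → β → ℝ) : ℝ :=
  ∑ a, ∑ b, Q a * W a b * Real.logb 2 (W a b / (∑ a', Q a' * W a' b))

/-- The rate–distortion function `R(D,Q)` (base 2). -/
noncomputable def RD {X Xh : Type*} [Fintype X] [Fintype Xh]
    (d : X → Xh → ℝ) (D : ℝ) (Q : X → ℝ) : ℝ :=
  sInf { r | ∃ V : X → Xh → ℝ, IsCondPMF V ∧
    (∑ x, ∑ xh, Q x * V x xh * d x xh) ≤ D ∧ r = mutInf2 Q V }

/-- Empirical distribution of a sequence. -/
noncomputable def empDist {X : Type*} [Fintype X] {n : ℕ} (x : Fin n → X) : X → ℝ :=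
  fun a => ((Finset.univ.filter (fun i => x i = a)).card : ℝ) / n

/-- Base-2 empirical entropy of a sequence. -/
noncomputable def empEnt {X : Type*} [Fintype X] {n : ℕ} (x : Fin n → X) : ℝ :=
  - ∑ a, empDist x a * Real.logb 2 (empDist x a)

/-- Additive (per-block) distortion between sequences. -/
noncomputable def dSeq {X Xh : Type*} {n : ℕ} (d : X → Xh → ℝ)
    (x : Fin n → X) (xh : Fin n → Xh) : ℝ :=
  ∑ i, d (x i) (xh i)

/-- The universal guessing distribution `P̃(x̂) ∝ 2^{-n Ĥ_x̂}` on `𝒳̂ⁿ`. -/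
noncomputable def univDist {Xh : Type*} [Fintype Xh] {n : ℕ} (xh : Fin n → Xh) : ℝ :=
  (2 : ℝ) ^ (-(n : ℝ) * empEnt xh) / ∑ z : Fin n → Xh, (2 : ℝ) ^ (-(n : ℝ) * empEnt z)

/-- Probability of the distortion ball `S(x)` under the universal distribution. -/
noncomputable def univDistBall {X Xh : Type*} [Fintype Xh] {n : ℕ}
    (d : X → Xh → ℝ) (D : ℝ) (x : Fin n → X) : ℝ :=
  ∑ xh ∈ Finset.univ.filter (fun xh : Fin n → Xh => dSeq d x xh ≤ (n : ℝ) * D), univDist xh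

end Defs

/-- The guessing function induced by an ordering of `𝒳̂ⁿ` (given as a bijection `e` of `𝒳̂ⁿ`
with initial segment positions): `G(x)` is the smallest (1-based) position of a guess within
distortion `nD` of `x`. -/
noncomputable def guessOf {X Xh : Type*} [Fintype Xh] {n : ℕ} (d : X → Xh → ℝ) (D : ℝ)
    (e : (Fin n → Xh) ≃ Fin (Fintype.card (Fin n → Xh))) (x : Fin n → X) : ℕ :=
  sInf {j : ℕ | ∃ xh : Fin n → Xh, dSeq d x xh ≤ (n : ℝ) * D ∧ j = (e xh : ℕ) + 1}

/-- For any distribution `Q^K` on `𝒳^K`, any guessing function `G` for block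
length `K` (induced by an ordering of `𝒳̂^K`) and any `δ > 0`, with
`c(δ) = (Σ_{i≥1} i^{−(1+δ)})⁻¹`:
`Σ_x Q^K(x) log₂ G(x) ≥ (R_K(D,Q^K) − 1 + log₂ c(δ))/(1+δ)`. -/
lemma mutInf2_nonneg {α β : Type*} [Fintype α] [Fintype β]
    (Q : α → ℝ) (W : α → β → ℝ) (hQ : IsPMF Q) (hW : IsCondPMF W) :
    0 ≤ mutInf2 Q W := by
  have hlog2 : (0:ℝ) < Real.log 2 := Real.log_pos one_lt_two
  set QW : β → ℝ := fun b => ∑ a', Q a' * W a' b with hQW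
  have hQWnn : ∀ b, 0 ≤ QW b := fun b =>
    Finset.sum_nonneg fun a _ => mul_nonneg (hQ.1 a) ((hW a).1 b)
  have key : ∀ a b, (Q a * W a b - Q a * QW b) / Real.log 2 ≤
      Q a * W a b * Real.logb 2 (W a b / QW b) := by
    intro a b
    rcases (mul_nonneg (hQ.1 a) ((hW a).1 b)).eq_or_lt with h | h
    · rw [← h]
      have : (0 - Q a * QW b) / Real.log 2 ≤ 0 := by
        apply div_nonpos_of_nonpos_of_nonneg
        · simp [mul_nonneg (hQ.1 a) (hQWnn b)]
        · exact hlog2.le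
      simpa using this
    · have hWab : 0 < W a b := by nlinarith [hQ.1 a, (hW a).1 b]
      have hQWb : 0 < QW b := lt_of_lt_of_le h (Finset.single_le_sum
        (fun a' _ => mul_nonneg (hQ.1 a') ((hW a').1 b)) (Finset.mem_univ a))
      have hlb : 1 - QW b / W a b ≤ Real.log (W a b / QW b) := by
        have h1 := Real.log_le_sub_one_of_pos (div_pos hQWb hWab)
        have h2 : Real.log (W a b / QW b) = - Real.log (QW b / W a b) := by
          rw [← Real.log_inv, inv_div]
        linarith
      have hmul := mul_le_mul_of_nonneg_left hlb h.le
      have heq : Q a * W a b * (1 - QW b / W a b) = Q a * W a b - Q a * QW b := by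
        field_simp
      rw [div_le_iff₀ hlog2, Real.logb]
      have h3 : Q a * W a b * (Real.log (W a b / QW b) / Real.log 2) * Real.log 2
          = Q a * W a b * Real.log (W a b / QW b) := by field_simp
      rw [h3]; linarith
  have hA : ∑ a, ∑ b, Q a * W a b = 1 := by
    have : ∀ a, ∑ b, Q a * W a b = Q a := by
      intro a; rw [← Finset.mul_sum, (hW a).2, mul_one]
    simp only [this]; exact hQ.2
  have hB : ∑ b, QW b = 1 := by
    rw [hQW, Finset.sum_comm]; exact hA
  have hC : ∑ a, ∑ b, Q a * QW b = 1 := by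
    have : ∀ a, ∑ b, Q a * QW b = Q a := by
      intro a; rw [← Finset.mul_sum, hB, mul_one]
    simp only [this]; exact hQ.2
  have h0 : ∑ a, ∑ b, (Q a * W a b - Q a * QW b) / Real.log 2 = 0 := by
    have hz : ∑ a, ∑ b, (Q a * W a b - Q a * QW b) = 0 := by
      simp only [Finset.sum_sub_distrib, hA, hC, sub_self]
    simp only [← Finset.sum_div, hz, zero_div]
  calc (0:ℝ) = ∑ a, ∑ b, (Q a * W a b - Q a * QW b) / Real.log 2 := h0.symm
    _ ≤ mutInf2 Q W := by
        apply Finset.sum_le_sum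
        intro a _
        exact Finset.sum_le_sum fun b _ => key a b

theorem expected_log_guesswork_lower_bound
    {X Xh : Type*} [Fintype X] [Fintype Xh]
    (d : X → Xh → ℝ) (hd : ∀ x xh, 0 ≤ d x xh) (D : ℝ)
    (hcover : ∀ x : X, ∃ xh : Xh, d x xh = 0)
    (K : ℕ) (hK : 0 < K) (δ : ℝ) (hδ : 0 < δ)
    (QK : (Fin K → X) → ℝ) (hQK : IsPMF QK)
    (e : (Fin K → Xh) ≃ Fin (Fintype.card (Fin K → Xh))) :
    (RD (dSeq d) ((K : ℝ) * D) QK - 1 +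
        Real.logb 2 (∑' i : ℕ, ((i : ℝ) + 1) ^ (-(1 + δ)))⁻¹) / (1 + δ) ≤
      ∑ x : Fin K → X, QK x * Real.logb 2 (guessOf d D e x) := by
  obtain ⟨hQnn, hQsum⟩ := hQK
  have hδ1 : (0:ℝ) < 1 + δ := by linarith
  have hlog2 : (0:ℝ) < Real.log 2 := Real.log_pos one_lt_two
  set tS := ∑' i : ℕ, ((i : ℝ) + 1) ^ (-(1 + δ)) with htS
  have hsum : Summable (fun i : ℕ => ((i:ℝ)+1) ^ (-(1+δ))) := by
    have h1 : Summable (fun n : ℕ => (n:ℝ) ^ (-(1+δ))) :=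
      Real.summable_nat_rpow.2 (by linarith)
    have h2 := (summable_nat_add_iff 1).2 h1
    simpa using h2
  have htnn : ∀ i:ℕ, 0 ≤ ((i:ℝ)+1)^(-(1+δ)) := fun i => Real.rpow_nonneg (by positivity) _
  have hS1 : (1:ℝ) ≤ tS := by
    have h0 := Summable.le_tsum hsum 0 (fun j _ => htnn j)
    simp only [Nat.cast_zero, zero_add, Real.one_rpow] at h0
    rw [htS]; exact h0
  have hSpos : (0:ℝ) < tS := lt_of_lt_of_le one_pos hS1
  have hRHSnn : 0 ≤ ∑ x : Fin K → X, QK x * Real.logb 2 (guessOf d D e x) := by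
    apply Finset.sum_nonneg; intro x _
    apply mul_nonneg (hQnn x)
    rcases Nat.eq_zero_or_pos (guessOf d D e x) with h|h
    · simp [h]
    · exact Real.logb_nonneg one_lt_two (by exact_mod_cast h)
  have hloginv : Real.logb 2 tS⁻¹ = - Real.logb 2 tS := Real.logb_inv _ _
  have hlogS : 0 ≤ Real.logb 2 tS := Real.logb_nonneg one_lt_two hS1
  rcases lt_or_ge ((K:ℝ)*D) 0 with hKD | hKD
  · have hRD0 : RD (dSeq d) ((K:ℝ)*D) QK = 0 := by
      unfold RD
      have hempty : { r | ∃ V : (Fin K → X) → (Fin K → Xh) → ℝ, IsCondPMF V ∧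
          (∑ x, ∑ xh, QK x * V x xh * dSeq d x xh) ≤ (K:ℝ)*D ∧ r = mutInf2 QK V } = ∅ := by
        ext r
        simp only [Set.mem_setOf_eq, Set.mem_empty_iff_false, iff_false]
        rintro ⟨V, hV, hdist, -⟩
        have hnn : (0:ℝ) ≤ ∑ x, ∑ xh, QK x * V x xh * dSeq d x xh := by
          apply Finset.sum_nonneg; intro x _
          apply Finset.sum_nonneg; intro xh _
          exact mul_nonneg (mul_nonneg (hQnn x) ((hV x).1 xh))
            (Finset.sum_nonneg fun i _ => hd _ _)
        linarith
      rw [hempty, Real.sInf_empty]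
    rw [hRD0, hloginv]
    have hle : (0 - 1 + -Real.logb 2 tS) / (1 + δ) ≤ 0 := by
      apply div_nonpos_of_nonpos_of_nonneg <;> linarith
    linarith
  · -- main case : 0 ≤ K*D
    have hne : ∀ x : Fin K → X,
        {j : ℕ | ∃ xh : Fin K → Xh, dSeq d x xh ≤ (K:ℝ)*D ∧ j = (e xh : ℕ)+1}.Nonempty := by
      intro x
      refine ⟨(e (fun i => Classical.choose (hcover (x i))) : ℕ) + 1,
        fun i => Classical.choose (hcover (x i)), ?_, rfl⟩
      have h0 : dSeq d x (fun i => Classical.choose (hcover (x i))) = 0 :=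
        Finset.sum_eq_zero fun i _ => Classical.choose_spec (hcover (x i))
      rw [h0]; exact hKD
    have hmem : ∀ x : Fin K → X, ∃ xh : Fin K → Xh,
        dSeq d x xh ≤ (K:ℝ)*D ∧ guessOf d D e x = (e xh : ℕ) + 1 :=
      fun x => Nat.sInf_mem (hne x)
    choose f hf1 hf2 using hmem
    set V : (Fin K → X) → (Fin K → Xh) → ℝ := fun x b => if b = f x then 1 else 0 with hVdef
    have hV : IsCondPMF V := by
      intro x
      constructor
      · intro b; dsimp only [V]; split <;> norm_num
      · simp [V]
    set QV : (Fin K → Xh) → ℝ := fun b => ∑ a', QK a' * V a' b with hQVdef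
    have hQVnn : ∀ b, 0 ≤ QV b := fun b =>
      Finset.sum_nonneg fun a _ => mul_nonneg (hQnn a) ((hV a).1 b)
    have hgroup : ∀ g : (Fin K → Xh) → ℝ, ∑ b, QV b * g b = ∑ x, QK x * g (f x) := by
      intro g
      calc ∑ b, QV b * g b = ∑ b, ∑ x, QK x * V x b * g b := by
            simp only [hQVdef, Finset.sum_mul]
        _ = ∑ x, ∑ b, QK x * V x b * g b := Finset.sum_comm
        _ = ∑ x, QK x * g (f x) := by
            apply Finset.sum_congr rfl; intro x _
            simp [V, mul_ite, ite_mul, Finset.sum_ite_eq']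
    have hQVsum : ∑ b, QV b = 1 := by
      have := hgroup (fun _ => 1)
      simp only [mul_one] at this
      rw [this]; exact hQsum
    set P : (Fin K → Xh) → ℝ := fun b => ((e b : ℕ) + 1 : ℝ) ^ (-(1+δ)) / tS with hPdef
    have hPpos : ∀ b, 0 < P b := fun b =>
      div_pos (Real.rpow_pos_of_pos (by positivity) _) hSpos
    have hPsum : ∑ b, P b ≤ 1 := by
      have h1 : ∑ b : Fin K → Xh, (((e b : ℕ) + 1 : ℝ)) ^ (-(1+δ))
          = ∑ j : Fin (Fintype.card (Fin K → Xh)), (((j : ℕ) + 1 : ℝ)) ^ (-(1+δ)) :=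
        Equiv.sum_comp e (fun j => (((j : ℕ) + 1 : ℝ)) ^ (-(1+δ)))
      have h2 : ∑ j : Fin (Fintype.card (Fin K → Xh)), (((j : ℕ) + 1 : ℝ)) ^ (-(1+δ))
          = ∑ i ∈ Finset.range (Fintype.card (Fin K → Xh)), ((i:ℝ)+1) ^ (-(1+δ)) := by
        rw [Finset.sum_range fun i => ((i:ℝ)+1) ^ (-(1+δ))]
      have h3 : ∑ i ∈ Finset.range (Fintype.card (Fin K → Xh)), ((i:ℝ)+1) ^ (-(1+δ)) ≤ tS :=
        Summable.sum_le_tsum _ (fun i _ => htnn i) hsum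
      have : ∑ b, P b = (∑ b : Fin K → Xh, (((e b : ℕ) + 1 : ℝ)) ^ (-(1+δ))) / tS := by
        rw [hPdef, Finset.sum_div]
      rw [this, div_le_one hSpos, h1, h2]; exact h3
    -- distortion constraint
    have hdist : ∑ x, ∑ xh, QK x * V x xh * dSeq d x xh ≤ (K:ℝ)*D := by
      have hrow : ∀ x, ∑ xh, QK x * V x xh * dSeq d x xh = QK x * dSeq d x (f x) := by
        intro x
        simp [V, mul_ite, ite_mul, Finset.sum_ite_eq']
      calc ∑ x, ∑ xh, QK x * V x xh * dSeq d x xh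
          = ∑ x, QK x * dSeq d x (f x) := by simp only [hrow]
        _ ≤ ∑ x, QK x * ((K:ℝ)*D) :=
            Finset.sum_le_sum fun x _ => mul_le_mul_of_nonneg_left (hf1 x) (hQnn x)
        _ = (K:ℝ)*D := by rw [← Finset.sum_mul, hQsum, one_mul]
    have hRD_le : RD (dSeq d) ((K:ℝ)*D) QK ≤ mutInf2 QK V := by
      apply csInf_le
      · refine ⟨0, ?_⟩
        rintro r ⟨V', hV', -, rfl⟩
        exact mutInf2_nonneg QK V' ⟨hQnn, hQsum⟩ hV'
      · exact ⟨V, hV, hdist, rfl⟩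
    -- step A
    have hstepA : mutInf2 QK V = ∑ x, QK x * Real.logb 2 (1 / QV (f x)) := by
      unfold mutInf2
      apply Finset.sum_congr rfl
      intro x _
      rw [Finset.sum_eq_single (f x)]
      · have h1 : V x (f x) = 1 := by simp [V]
        rw [h1, mul_one]
      · intro b _ hb
        have h0 : V x b = 0 := by simp [V, hb]
        rw [h0, mul_zero, zero_mul]
      · intro h; exact absurd (Finset.mem_univ _) h
    -- Gibbs per-b
    have hGibbs : ∀ b, QV b * Real.logb 2 (1 / QV b) ≤
        QV b * Real.logb 2 (1 / P b) + (P b - QV b)/Real.log 2 := by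
      intro b
      rcases (hQVnn b).eq_or_lt with h|h
      · rw [← h]
        simp only [zero_mul, sub_zero, zero_add]
        positivity
      · have key2 : QV b * (Real.log (P b) - Real.log (QV b)) ≤ P b - QV b := by
          have hln : Real.log (P b / QV b) ≤ P b / QV b - 1 :=
            Real.log_le_sub_one_of_pos (div_pos (hPpos b) h)
          have hld : Real.log (P b / QV b) = Real.log (P b) - Real.log (QV b) :=
            Real.log_div (ne_of_gt (hPpos b)) (ne_of_gt h)
          have hmul := mul_le_mul_of_nonneg_left hln h.le
          have heq : QV b * (P b / QV b - 1) = P b - QV b := by field_simp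
          rw [hld] at hmul; linarith
        rw [one_div, one_div, Real.logb_inv, Real.logb_inv, Real.logb, Real.logb]
        rw [show QV b * -(Real.log (QV b) / Real.log 2)
            = (QV b * -Real.log (QV b))/Real.log 2 from by ring,
          show QV b * -(Real.log (P b) / Real.log 2) + (P b - QV b)/Real.log 2
            = (QV b * -Real.log (P b) + (P b - QV b))/Real.log 2 from by ring]
        rw [div_le_div_iff_of_pos_right hlog2]
        nlinarith [key2]
    have hPlog : ∀ b, Real.logb 2 (1/P b)
        = (1+δ) * Real.logb 2 (((e b : ℕ) + 1 : ℝ)) + Real.logb 2 tS := by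
      intro b
      have hy : (0:ℝ) < ((e b : ℕ) + 1 : ℝ) := by positivity
      rw [one_div, Real.logb_inv, hPdef]
      rw [Real.logb_div (ne_of_gt (Real.rpow_pos_of_pos hy _)) (ne_of_gt hSpos)]
      rw [Real.logb, Real.log_rpow hy, Real.logb, Real.logb]
      ring
    -- combine
    have hchain : mutInf2 QK V ≤
        (1+δ) * (∑ x, QK x * Real.logb 2 (guessOf d D e x)) + Real.logb 2 tS := by
      have c1 : mutInf2 QK V = ∑ b, QV b * Real.logb 2 (1 / QV b) := by
        rw [hstepA, hgroup]
      have c2 : ∑ b, QV b * Real.logb 2 (1 / QV b)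
          ≤ ∑ b, (QV b * Real.logb 2 (1 / P b) + (P b - QV b)/Real.log 2) :=
        Finset.sum_le_sum fun b _ => hGibbs b
      have c3 : ∑ b, (QV b * Real.logb 2 (1 / P b) + (P b - QV b)/Real.log 2)
          ≤ ∑ b, QV b * Real.logb 2 (1 / P b) := by
        rw [Finset.sum_add_distrib]
        have : ∑ b, (P b - QV b)/Real.log 2 ≤ 0 := by
          rw [← Finset.sum_div]
          apply div_nonpos_of_nonpos_of_nonneg _ hlog2.le
          rw [Finset.sum_sub_distrib, hQVsum]
          linarith
        linarith
      have c4 : ∑ b, QV b * Real.logb 2 (1 / P b)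
          = ∑ x, QK x * Real.logb 2 (1 / P (f x)) := hgroup _
      have c5 : ∑ x, QK x * Real.logb 2 (1 / P (f x))
          = (1+δ) * (∑ x, QK x * Real.logb 2 (guessOf d D e x)) + Real.logb 2 tS := by
        have hcast : ∀ x, Real.logb 2 (((e (f x) : ℕ) + 1 : ℝ))
            = Real.logb 2 ((guessOf d D e x : ℕ) : ℝ) := by
          intro x; rw [hf2 x]; push_cast; ring_nf
        calc ∑ x, QK x * Real.logb 2 (1 / P (f x))
            = ∑ x, (QK x * ((1+δ) * Real.logb 2 ((guessOf d D e x : ℕ) : ℝ))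
                + QK x * Real.logb 2 tS) := by
              apply Finset.sum_congr rfl; intro x _
              rw [hPlog, hcast x]; ring
          _ = (1+δ) * (∑ x, QK x * Real.logb 2 (guessOf d D e x)) + Real.logb 2 tS := by
              rw [Finset.sum_add_distrib, ← Finset.sum_mul, hQsum, one_mul,
                Finset.mul_sum]
              congr 1
              apply Finset.sum_congr rfl; intro x _; ring
      calc mutInf2 QK V = ∑ b, QV b * Real.logb 2 (1 / QV b) := c1
        _ ≤ ∑ b, (QV b * Real.logb 2 (1 / P b) + (P b - QV b)/Real.log 2) := c2
        _ ≤ ∑ b, QV b * Real.logb 2 (1 / P b) := c3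
        _ = (1+δ) * (∑ x, QK x * Real.logb 2 (guessOf d D e x)) + Real.logb 2 tS := by
            rw [c4, c5]
    rw [div_le_iff₀ hδ1, hloginv]
    have hfin := hRD_le.trans hchain
    have hcomm : (1+δ) * (∑ x, QK x * Real.logb 2 (guessOf d D e x))
        = (∑ x, QK x * Real.logb 2 (guessOf d D e x)) * (1+δ) := mul_comm _ _
    linarith [hfin, hcomm]
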